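/- For every nonnegative integer D and positive integer l, there exists a planar graph in which every cycle has length 4 or 2l+1 and which is not (D, D)-colorable. -/

import Mathlib

open SimpleGraph

/-- `H` is a minor of `G`: branch sets are nonempty, connected, pairwise disjoint,
and edges of `H` are realized between branch sets. -/
def SimpleGraph.IsMinor {W V : Type*} (H : SimpleGraph W) (G : SimpleGraph V) : Prop :=
  ∃ f : W → Set V, (∀ w, (f w).Nonempty) ∧ (∀ w, (G.induce (f w)).Connected) ∧
    (∀ w w', w ≠ w' → Disjoint (f w) (f w')) ∧
    (∀ w w', H.Adj w w' → ∃ a ∈ f w, ∃ b ∈ f w', G.Adj a b)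

/-- A graph is planar iff it has no `K₅` minor and no `K₃,₃` minor (Wagner's theorem). -/
def SimpleGraph.Planar {V : Type*} (G : SimpleGraph V) : Prop :=
  ¬ (completeGraph (Fin 5)).IsMinor G ∧
    ¬ (completeBipartiteGraph (Fin 3) (Fin 3)).IsMinor G

/-- `G` contains no cycle of length `n` (as a subgraph). -/
def SimpleGraph.HasNoCycleOfLength {V : Type*} (G : SimpleGraph V) (n : ℕ) : Prop :=
  ∀ (v : V) (w : G.Walk v v), w.IsCycle → w.length ≠ n

/-- `f` is a `(d 0, …, d (k-1))`-coloring of `G`: each vertex has at most `d (f v)`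
neighbors in its own color class. -/
def SimpleGraph.IsDefectiveColoring {V : Type*} {k : ℕ} (G : SimpleGraph V)
    (d : Fin k → ℕ) (f : V → Fin k) : Prop :=
  ∀ v, {u | G.Adj v u ∧ f u = f v}.ncard ≤ d (f v)

/-- `G` is `(d 0, …, d (k-1))`-colorable. -/
def SimpleGraph.DefectiveColorable {V : Type*} {k : ℕ} (G : SimpleGraph V)
    (d : Fin k → ℕ) : Prop :=
  ∃ f : V → Fin k, G.IsDefectiveColoring d f

namespace HDL

inductive Vtx (D l : ℕ) : Type where
  | hub : Vtx D l
  | br (c : Fin (D+1)) (i : Fin l) : Vtx D l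
  | mid (c : Fin (D+1)) (i : Fin l) (j : Fin (2*D+1)) : Vtx D l
deriving DecidableEq, Fintype

namespace Vtx

variable {D l : ℕ}

def adj : Vtx D l → Vtx D l → Prop
  | hub, br _ i => i.val + 1 = l
  | br _ i, hub => i.val + 1 = l
  | hub, mid _ i _ => i.val = 0
  | mid _ i _, hub => i.val = 0
  | br c i, mid c' i' _ => c = c' ∧ (i' = i ∨ i'.val = i.val + 1)
  | mid c' i' _, br c i => c = c' ∧ (i' = i ∨ i'.val = i.val + 1)
  | _, _ => False

lemma adj_symm : ∀ u v : Vtx D l, adj u v → adj v u := by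
  intro u v h; cases u <;> cases v <;> simp_all [adj]

lemma adj_irrefl : ∀ u : Vtx D l, ¬ adj u u := by
  intro u h; cases u <;> simp_all [adj]

/-- branch-type vertex (hub or br) -/
def isBr : Vtx D l → Prop
  | hub => True
  | br _ _ => True
  | mid _ _ _ => False

/-- position along the cycle: hub at 0, br c i at i+1. -/
def pos : Vtx D l → ℕ
  | hub => 0
  | br _ i => i.val + 1
  | mid _ _ _ => 0

/-- copy -/
def cp : Vtx D l → Option (Fin (D+1))
  | hub => none
  | br c _ => some c
  | mid c _ _ => some c

def inCopy (c : Fin (D+1)) (v : Vtx D l) : Prop := v = hub ∨ cp v = some c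

lemma inCopy_hub (c : Fin (D+1)) : inCopy c (hub : Vtx D l) := Or.inl rfl

lemma pos_le (v : Vtx D l) : pos v ≤ l := by
  cases v with
  | hub => exact Nat.zero_le l
  | br c i => exact i.isLt
  | mid => exact Nat.zero_le l

/-- a branch-type vertex is determined by its position and copy-compatibility -/
lemma brInj {c : Fin (D+1)} {u v : Vtx D l} (hu : isBr u) (hv : isBr v)
    (hcu : inCopy c u) (hcv : inCopy c v) (hp : pos u = pos v) : u = v := by
  cases u with
  | mid => exact absurd hu (by simp [isBr])
  | hub =>
    cases v with
    | mid => exact absurd hv (by simp [isBr])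
    | hub => rfl
    | br c' i => simp [pos] at hp
  | br c' i =>
    cases v with
    | mid => exact absurd hv (by simp [isBr])
    | hub => simp [pos] at hp
    | br c'' i' =>
      simp only [pos, Nat.add_right_cancel_iff] at hp
      rcases hcu with h | h
      · exact absurd h (by simp)
      rcases hcv with h' | h'
      · exact absurd h' (by simp)
      simp [cp] at h h'
      subst h h'
      congr 1
      exact Fin.ext hp

/-- closing-edge predicate on vertex pairs -/
def isClosing (e : Sym2 (Vtx D l)) : Prop :=
  ∃ (c : Fin (D+1)) (i : Fin l), i.val + 1 = l ∧ e = s(hub, br c i)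

/-- adjacency of two branch-type vertices is a closing edge -/
lemma br_br_adj {u v : Vtx D l} (h : adj u v) (hu : isBr u) (hv : isBr v) :
    isClosing s(u, v) ∧ ((pos u = 0 ∧ pos v = l) ∨ (pos u = l ∧ pos v = 0)) := by
  cases u with
  | mid => exact absurd hu (by simp [isBr])
  | hub =>
    cases v with
    | mid => exact absurd hv (by simp [isBr])
    | hub => exact absurd h (adj_irrefl _)
    | br c i =>
      refine ⟨⟨c, i, h, rfl⟩, Or.inl ⟨rfl, ?_⟩⟩
      exact h
  | br c i =>
    cases v with
    | mid => exact absurd hv (by simp [isBr])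
    | br c' i' => exact absurd h (by simp [adj])
    | hub =>
      have h' : i.val + 1 = l := h
      refine ⟨⟨c, i, h', by rw [Sym2.eq_swap]⟩, Or.inr ⟨by simpa [pos] using h', rfl⟩⟩

/-- neighbors of a middle vertex -/
lemma mid_nbr {c : Fin (D+1)} {i : Fin l} {j : Fin (2*D+1)} {v : Vtx D l}
    (h : adj (mid c i j) v) :
    isBr v ∧ inCopy c v ∧ (pos v = i.val ∨ pos v = i.val + 1) := by
  cases v with
  | mid => exact absurd h (by simp [adj])
  | hub =>
    have : i.val = 0 := h
    exact ⟨trivial, inCopy_hub c, Or.inl (by simp [pos, this])⟩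
  | br c' i' =>
    obtain ⟨hc, hi⟩ := h
    subst hc
    refine ⟨trivial, Or.inr rfl, ?_⟩
    rcases hi with h1 | h1
    · subst h1; exact Or.inr rfl
    · exact Or.inl (by simp [pos, h1])

/-- an edge that is not closing has a middle endpoint -/
lemma exists_mid_of_not_closing {u v : Vtx D l} (h : adj u v) (hnc : ¬ isClosing s(u, v)) :
    (∃ c i j, u = mid c i j) ∨ (∃ c i j, v = mid c i j) := by
  by_cases hu : isBr u
  · by_cases hv : isBr v
    · exact absurd (br_br_adj h hu hv).1 hnc
    · right; cases v with
      | hub => exact absurd trivial hv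
      | br => exact absurd trivial hv
      | mid c i j => exact ⟨c, i, j, rfl⟩
  · left; cases u with
    | hub => exact absurd trivial hu
    | br => exact absurd trivial hu
    | mid c i j => exact ⟨c, i, j, rfl⟩

/-- adjacency between non-hub vertices preserves the copy -/
lemma cp_adj {u v : Vtx D l} (h : adj u v) (hu : u ≠ hub) (hv : v ≠ hub) :
    cp u = cp v := by
  cases u <;> cases v <;> simp_all [adj, cp]

end Vtx

def G (D l : ℕ) : SimpleGraph (Vtx D l) where
  Adj := Vtx.adj
  symm := ⟨Vtx.adj_symm⟩
  loopless := ⟨Vtx.adj_irrefl⟩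

end HDL

namespace HDL
open Vtx

variable {D l : ℕ}

lemma G_adj {u v : Vtx D l} : (G D l).Adj u v ↔ adj u v := Iff.rfl

lemma ne_hub_of_cp {c : Fin (D+1)} {x : Vtx D l} (h : cp x = some c) : x ≠ hub := by
  intro h'; subst h'; simp [cp] at h

lemma inCopy_mid {c c' : Fin (D+1)} {i : Fin l} {j : Fin (2*D+1)}
    (h : inCopy c (mid c' i j : Vtx D l)) : c' = c := by
  rcases h with h | h
  · exact absurd h (by simp)
  · simpa [cp] using h

lemma not_isBr_mid {c : Fin (D+1)} {i : Fin l} {j : Fin (2*D+1)} :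
    ¬ isBr (mid c i j : Vtx D l) := by simp [isBr]

/-- walks avoiding the hub stay in one copy -/
lemma walk_cp_const : ∀ {x y : Vtx D l} (w : (G D l).Walk x y),
    (∀ v ∈ w.support, v ≠ hub) → ∀ v ∈ w.support, cp v = cp y := by
  intro x y w
  induction w with
  | nil => intro _ v hv; simp_all [SimpleGraph.Walk.support_nil]
  | @cons x x₁ y h' q IH =>
    intro hnh v hv
    rw [SimpleGraph.Walk.support_cons] at hv
    rcases List.mem_cons.mp hv with rfl | hv
    · have h1 : cp v = cp x₁ := cp_adj h' (hnh v (by simp)) (hnh x₁ (by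
        rw [SimpleGraph.Walk.support_cons]; exact List.mem_cons_of_mem _ q.start_mem_support))
      rw [h1]
      exact IH (fun u hu => hnh u (by rw [SimpleGraph.Walk.support_cons]; exact List.mem_cons_of_mem _ hu))
        x₁ q.start_mem_support
    · exact IH (fun u hu => hnh u (by rw [SimpleGraph.Walk.support_cons]; exact List.mem_cons_of_mem _ hu)) v hv

/-- paths starting in copy c (or at hub) and ending in copy c stay in copy c (plus hub) -/
lemma path_inCopy {c : Fin (D+1)} : ∀ {x y : Vtx D l} (w : (G D l).Walk x y),
    w.IsPath → (x = hub ∨ cp x = some c) → cp y = some c →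
    ∀ v ∈ w.support, inCopy c v := by
  intro x y w
  induction w with
  | nil =>
    intro _ hx hy v hv
    rw [SimpleGraph.Walk.support_nil] at hv
    simp only [List.mem_singleton] at hv; subst hv
    rcases hx with h | h
    · exact Or.inl h
    · exact Or.inr h
  | @cons x x₁ y h' q IH =>
    intro hp hx hy v hv
    rw [SimpleGraph.Walk.support_cons] at hv
    have hxmem : x ∉ q.support := by
      have := (SimpleGraph.Walk.isPath_def _).mp hp
      rw [SimpleGraph.Walk.support_cons] at this
      exact (List.nodup_cons.mp this).1
    rcases List.mem_cons.mp hv with hveq | hvmem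
    · subst hveq
      rcases hx with h1 | h1
      · exact Or.inl h1
      · exact Or.inr h1
    · rcases hx with h1 | h1
      · -- x = hub : the rest of the path avoids hub
        subst h1
        have hnh : ∀ u ∈ q.support, u ≠ hub := by
          intro u hu he; subst he; exact hxmem hu
        have := walk_cp_const q hnh v hvmem
        rw [hy] at this
        exact Or.inr this
      · -- x in copy c
        by_cases hx₁ : x₁ = hub
        · exact IH hp.of_cons (Or.inl hx₁) hy v hvmem
        · have : cp x₁ = cp x := (cp_adj h' (ne_hub_of_cp h1) hx₁).symm
          exact IH hp.of_cons (Or.inr (this.trans h1)) hy v hvmem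

/-- an edge of a path containing the initial vertex is the first edge -/
lemma first_edge {x y a : Vtx D l} (q : (G D l).Walk x y) (hq : q.IsPath)
    (he : s(x, a) ∈ q.edges) : ∃ (h : (G D l).Adj x a) (q₂ : (G D l).Walk a y),
      q = SimpleGraph.Walk.cons h q₂ := by
  cases q with
  | nil => simp [SimpleGraph.Walk.edges_nil] at he
  | @cons x x₁ y h' q₂ =>
    rw [SimpleGraph.Walk.edges_cons] at he
    rcases List.mem_cons.mp he with he | he
    · rw [Sym2.eq_iff] at he
      rcases he with ⟨-, rfl⟩ | ⟨h1, rfl⟩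
      · exact ⟨h', q₂, rfl⟩
      · exact absurd h1 ((G D l).ne_of_adj h')
    · exfalso
      have hxs : x ∈ q₂.support := SimpleGraph.Walk.fst_mem_support_of_mem_edges q₂ he
      have := (SimpleGraph.Walk.isPath_def _).mp hq
      rw [SimpleGraph.Walk.support_cons] at this
      exact (List.nodup_cons.mp this).1 hxs

end HDL

namespace HDL
open Vtx SimpleGraph.Walk

variable {D l : ℕ}

/-- Main structural lemma: a path between branch vertices inside one copy,
using no closing edge, climbs monotonically. -/
lemma ML {c : Fin (D+1)} : ∀ (n : ℕ) {x y : Vtx D l} (w : (G D l).Walk x y),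
    w.length = n → w.IsPath → (∀ e ∈ w.edges, ¬ isClosing e) →
    (∀ v ∈ w.support, inCopy c v) → isBr x → isBr y →
    w.length = 2 * (max (pos x) (pos y) - min (pos x) (pos y)) ∧
    (∀ k, min (pos x) (pos y) ≤ k → k ≤ max (pos x) (pos y) →
      ∃ z ∈ w.support, isBr z ∧ pos z = k) := by
  intro n
  induction n using Nat.strong_induction_on with
  | _ n IHn =>
  intro x y w hn hp hnc hic hx hy
  cases w with
  | nil =>
    refine ⟨by simp, fun k hk1 hk2 => ⟨x, by simp, hx, by omega⟩⟩
  | @cons x x₁ y h' q =>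
    -- the second vertex is a middle vertex of copy c
    have hfe : s(x, x₁) ∈ (SimpleGraph.Walk.cons h' q).edges := by
      rw [SimpleGraph.Walk.edges_cons]; exact List.mem_cons_self
    have hx₁mem : x₁ ∈ (SimpleGraph.Walk.cons h' q).support := by
      rw [SimpleGraph.Walk.support_cons]; exact List.mem_cons_of_mem _ q.start_mem_support
    have hncf : ¬ isClosing s(x, x₁) := hnc _ hfe
    have hx₁ : ∃ c₁ i₁ j₁, x₁ = mid c₁ i₁ j₁ := by
      cases x₁ with
      | hub => exact absurd ((br_br_adj h' hx (by trivial)).1) hncf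
      | br c₁ i₁ => exact absurd ((br_br_adj h' hx (by trivial)).1) hncf
      | mid c₁ i₁ j₁ => exact ⟨c₁, i₁, j₁, rfl⟩
    obtain ⟨c₁, i₁, j₁, rfl⟩ := hx₁
    have hc₁ : c₁ = c := inCopy_mid (hic _ hx₁mem)
    subst hc₁
    -- q is not nil
    cases q with
    | nil => exact absurd hy not_isBr_mid
    | @cons x₁' x₂ y' h₂ r =>
      have hnbx : isBr x ∧ inCopy c₁ x ∧ (pos x = i₁.val ∨ pos x = i₁.val + 1) :=
        ⟨hx, hic x (by simp), (mid_nbr (adj_symm _ _ h')).2.2⟩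
      have hnbx₂ : isBr x₂ ∧ inCopy c₁ x₂ ∧ (pos x₂ = i₁.val ∨ pos x₂ = i₁.val + 1) :=
        mid_nbr h₂
      -- x ≠ x₂ by nodup
      have hnd := (SimpleGraph.Walk.isPath_def _).mp hp
      rw [SimpleGraph.Walk.support_cons, SimpleGraph.Walk.support_cons] at hnd
      have hxnot : x ∉ (mid c₁ i₁ j₁) :: r.support := (List.nodup_cons.mp hnd).1
      have hxne : x ≠ x₂ := by
        intro he
        exact hxnot (by rw [he]; exact List.mem_cons_of_mem _ r.start_mem_support)
      have hxnotr : x ∉ r.support := fun hm => hxnot (List.mem_cons_of_mem _ hm)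
      have hpne : pos x ≠ pos x₂ := fun he => hxne (brInj hnbx.1 hnbx₂.1 hnbx.2.1 hnbx₂.2.1 he)
      have hstep : pos x₂ = pos x + 1 ∨ pos x = pos x₂ + 1 := by omega
      -- apply the induction hypothesis to r
      have hrsub : ∀ v ∈ r.support, v ∈ (SimpleGraph.Walk.cons h' (SimpleGraph.Walk.cons h₂ r)).support := by
        intro v hv
        rw [SimpleGraph.Walk.support_cons, SimpleGraph.Walk.support_cons]
        exact List.mem_cons_of_mem _ (List.mem_cons_of_mem _ hv)
      have hresub : ∀ e ∈ r.edges, e ∈ (SimpleGraph.Walk.cons h' (SimpleGraph.Walk.cons h₂ r)).edges := by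
        intro e he
        rw [SimpleGraph.Walk.edges_cons, SimpleGraph.Walk.edges_cons]
        exact List.mem_cons_of_mem _ (List.mem_cons_of_mem _ he)
      have hlen : (SimpleGraph.Walk.cons h' (SimpleGraph.Walk.cons h₂ r)).length = r.length + 2 := by
        simp [SimpleGraph.Walk.length_cons]
      have IH := IHn r.length (by omega) r rfl (hp.of_cons.of_cons)
        (fun e he => hnc e (hresub e he)) (fun v hv => hic v (hrsub v hv)) hnbx₂.1 hy
      obtain ⟨Hlen, Hsupp⟩ := IH
      set a := pos x with ha
      set a' := pos x₂ with ha'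
      set b := pos y with hb
      have toward : max a b - min a b = (max a' b - min a' b) + 1 := by
        by_contra hcon
        have hbet : min a' b ≤ a ∧ a ≤ max a' b := by omega
        obtain ⟨z, hz, hbz, hpz⟩ := Hsupp a hbet.1 hbet.2
        have : z = x := brInj hbz hnbx.1 (hic z (hrsub z hz)) hnbx.2.1 (by omega)
        exact hxnotr (this ▸ hz)
      refine ⟨by omega, fun k hk1 hk2 => ?_⟩
      by_cases hka : k = a
      · exact ⟨x, by simp, hx, by omega⟩
      · have : min a' b ≤ k ∧ k ≤ max a' b := by omega
        obtain ⟨z, hz, hbz, hpz⟩ := Hsupp k this.1 this.2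
        exact ⟨z, hrsub z hz, hbz, hpz⟩

end HDL

namespace HDL
open Vtx

variable {D l : ℕ}

/-- adjacency on the position cycle 0,1,...,l,0 -/
def CycAdj (l : ℕ) (p q : ℕ) : Prop :=
  p = q + 1 ∨ q = p + 1 ∨ (p = 0 ∧ q = l) ∨ (p = l ∧ q = 0)

/-- A path between branch vertices staying in one copy induces a reachability chain
on the position cycle through positions realized on the path. -/
lemma WBL {c : Fin (D+1)} : ∀ (n : ℕ) {x y : Vtx D l} (w : (G D l).Walk x y),
    w.length = n → w.IsPath → (∀ v ∈ w.support, inCopy c v) → isBr x → isBr y →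
    Relation.ReflTransGen (fun p q => CycAdj l p q ∧
      (∃ z ∈ w.support, isBr z ∧ pos z = p) ∧ (∃ z ∈ w.support, isBr z ∧ pos z = q))
      (pos x) (pos y) := by
  intro n
  induction n using Nat.strong_induction_on with
  | _ n IHn =>
  intro x y w hn hp hic hx hy
  cases w with
  | nil => exact Relation.ReflTransGen.refl
  | @cons x x₁ y h' q =>
    by_cases hbx₁ : isBr x₁
    · -- closing edge step
      have hcl := (br_br_adj h' hx hbx₁).2
      have hstep : CycAdj l (pos x) (pos x₁) := by
        rcases hcl with ⟨h1, h2⟩ | ⟨h1, h2⟩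
        · exact Or.inr (Or.inr (Or.inl ⟨h1, h2⟩))
        · exact Or.inr (Or.inr (Or.inr ⟨h1, h2⟩))
      have hsub : ∀ v ∈ q.support, v ∈ (SimpleGraph.Walk.cons h' q).support := by
        intro v hv; rw [SimpleGraph.Walk.support_cons]; exact List.mem_cons_of_mem _ hv
      have IH := IHn q.length (by simp [SimpleGraph.Walk.length_cons] at hn; omega) q rfl
        hp.of_cons (fun v hv => hic v (hsub v hv)) hbx₁ hy
      refine Relation.ReflTransGen.head
        ⟨hstep, ⟨x, by simp, hx, rfl⟩, ⟨x₁, hsub _ q.start_mem_support, hbx₁, rfl⟩⟩ ?_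
      exact Relation.ReflTransGen.mono (fun p q' hpq => ⟨hpq.1, ⟨hpq.2.1.choose,
        (fun hh => ⟨hsub _ hh.1, hh.2⟩) hpq.2.1.choose_spec⟩,
        ⟨hpq.2.2.choose, (fun hh => ⟨hsub _ hh.1, hh.2⟩) hpq.2.2.choose_spec⟩⟩) _ _ IH
    · -- middle vertex: strip two steps
      have hx₁ : ∃ c₁ i₁ j₁, x₁ = mid c₁ i₁ j₁ := by
        cases x₁ with
        | hub => exact absurd (by trivial) hbx₁
        | br c₁ i₁ => exact absurd (by trivial) hbx₁
        | mid c₁ i₁ j₁ => exact ⟨c₁, i₁, j₁, rfl⟩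
      obtain ⟨c₁, i₁, j₁, rfl⟩ := hx₁
      have hc₁ : c₁ = c := inCopy_mid (hic _ (by
        rw [SimpleGraph.Walk.support_cons]
        exact List.mem_cons_of_mem _ q.start_mem_support))
      subst hc₁
      cases q with
      | nil => exact absurd hy not_isBr_mid
      | @cons x₁' x₂ y' h₂ r =>
        have hnbx : pos x = i₁.val ∨ pos x = i₁.val + 1 := (mid_nbr (adj_symm _ _ h')).2.2
        have hnbx₂ := mid_nbr h₂
        have hnd := (SimpleGraph.Walk.isPath_def _).mp hp
        rw [SimpleGraph.Walk.support_cons, SimpleGraph.Walk.support_cons] at hnd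
        have hxnot : x ∉ (mid c₁ i₁ j₁) :: r.support := (List.nodup_cons.mp hnd).1
        have hxne : x ≠ x₂ := by
          intro he
          exact hxnot (by rw [he]; exact List.mem_cons_of_mem _ r.start_mem_support)
        have hicx : inCopy c₁ x := hic x (by simp)
        have hicx₂ : inCopy c₁ x₂ := hnbx₂.2.1
        have hpne : pos x ≠ pos x₂ := fun he => hxne (brInj hx hnbx₂.1 hicx hicx₂ he)
        have hstep : CycAdj l (pos x) (pos x₂) := by
          rcases hnbx with h1 | h1 <;> rcases hnbx₂.2.2 with h2 | h2 <;>
            first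
            | exact absurd (h1.trans h2.symm) hpne
            | exact Or.inl (by omega)
            | exact Or.inr (Or.inl (by omega))
        have hsub : ∀ v ∈ r.support,
            v ∈ (SimpleGraph.Walk.cons h' (SimpleGraph.Walk.cons h₂ r)).support := by
          intro v hv
          rw [SimpleGraph.Walk.support_cons, SimpleGraph.Walk.support_cons]
          exact List.mem_cons_of_mem _ (List.mem_cons_of_mem _ hv)
        have IH := IHn r.length (by simp [SimpleGraph.Walk.length_cons] at hn; omega) r rfl
          hp.of_cons.of_cons (fun v hv => hic v (hsub v hv)) hnbx₂.1 hy
        refine Relation.ReflTransGen.head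
          ⟨hstep, ⟨x, by simp, hx, rfl⟩, ⟨x₂, hsub _ r.start_mem_support, hnbx₂.1, rfl⟩⟩ ?_
        exact Relation.ReflTransGen.mono (fun p q' hpq => ⟨hpq.1,
          ⟨hpq.2.1.choose, (fun hh => ⟨hsub _ hh.1, hh.2⟩) hpq.2.1.choose_spec⟩,
          ⟨hpq.2.2.choose, (fun hh => ⟨hsub _ hh.1, hh.2⟩) hpq.2.2.choose_spec⟩⟩) _ _ IH

end HDL

namespace HDL
open Vtx

variable {D l : ℕ}

lemma isBr_pos_zero {z : Vtx D l} (hz : isBr z) (hp : pos z = 0) : z = hub := by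
  cases z with
  | hub => rfl
  | br c i => simp [pos] at hp
  | mid => exact absurd hz not_isBr_mid

lemma hub_nbr {v : Vtx D l} (h : adj hub v) :
    (∃ c i, i.val + 1 = l ∧ v = br c i) ∨ (∃ c i j, i.val = 0 ∧ v = mid c i j) := by
  cases v with
  | hub => exact absurd h (adj_irrefl _)
  | br c i => exact Or.inl ⟨c, i, h, rfl⟩
  | mid c i j => exact Or.inr ⟨c, i, j, h, rfl⟩

lemma ne_mid_of_isBr {a : Vtx D l} (ha : isBr a) (c : Fin (D+1)) (i : Fin l)
    (j : Fin (2*D+1)) : (mid c i j : Vtx D l) ≠ a := by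
  intro h; rw [← h] at ha; exact not_isBr_mid ha

lemma length_rotate' {v u : Vtx D l} (w : (G D l).Walk v v) (h : u ∈ w.support) :
    (w.rotate _ h).length = w.length := by
  rw [← SimpleGraph.Walk.length_edges, ← SimpleGraph.Walk.length_edges]
  exact (SimpleGraph.Walk.rotate_edges w _ h).perm.length_eq

theorem cycle_len (hl : 1 ≤ l) {v : Vtx D l} (w : (G D l).Walk v v) (hw : w.IsCycle) :
    w.length = 4 ∨ w.length = 2 * l + 1 := by
  by_cases hclos : ∃ e ∈ w.edges, isClosing e
  · -- case: a closing edge is used; the cycle has length 2l+1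
    right
    obtain ⟨e, he, c₀, i₀, hi₀, rfl⟩ := hclos
    have hhub : (hub : Vtx D l) ∈ w.support :=
      SimpleGraph.Walk.fst_mem_support_of_mem_edges w he
    set w' := w.rotate _ hhub with hw'def
    have hlen : w'.length = w.length := length_rotate' w hhub
    have hw' : w'.IsCycle := hw.rotate hhub
    have hce' : s(hub, br c₀ i₀) ∈ w'.edges :=
      ((SimpleGraph.Walk.rotate_edges w _ hhub).perm.mem_iff).mpr he
    rw [← hlen]
    clear_value w'
    clear hw'def hlen he hhub hw
    obtain ⟨x₁, h', p, rfl⟩ := SimpleGraph.Walk.not_nil_iff.mp hw'.not_nil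
    obtain ⟨hp, hfe⟩ := (SimpleGraph.Walk.cons_isCycle_iff p h').mp hw'
    rcases hub_nbr h' with ⟨c, i, hi, rfl⟩ | ⟨c₁, i₁, j₁, hi₁, rfl⟩
    · -- first edge is closing : path from (br c i) to hub without closing edges
      have hpnc : ∀ e ∈ p.edges, ¬ isClosing e := by
        rintro e hep ⟨c₂, i₂, hi₂, rfl⟩
        have he' : s(hub, br c₂ i₂) ∈ p.reverse.edges := by
          rw [SimpleGraph.Walk.edges_reverse, List.mem_reverse]; exact hep
        obtain ⟨hadj, q₂, hqeq⟩ := first_edge p.reverse hp.reverse he'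
        have hnm : ∀ u ∈ q₂.support, u ≠ hub := by
          have hnd := (SimpleGraph.Walk.isPath_def _).mp hp.reverse
          rw [hqeq, SimpleGraph.Walk.support_cons] at hnd
          intro u hu hueq; subst hueq; exact (List.nodup_cons.mp hnd).1 hu
        have hcc := walk_cp_const q₂ hnm _ q₂.start_mem_support
        have : c₂ = c := by simpa [cp] using hcc
        subst this
        have : i₂ = i := Fin.ext (by omega)
        subst this
        exact hfe hep
      have hic : ∀ u ∈ p.support, inCopy c u := by
        intro u hu
        have := path_inCopy (c := c) p.reverse hp.reverse (Or.inl rfl) rfl u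
          (by rw [SimpleGraph.Walk.support_reverse, List.mem_reverse]; exact hu)
        exact this
      have hml := (ML p.length p rfl hp hpnc hic (by trivial) (by trivial)).1
      have hpos : pos (br c i : Vtx D l) = l := by simp only [pos]; omega
      have hposh : pos (hub : Vtx D l) = 0 := rfl
      have : p.length = 2 * l := by rw [hml, hpos, hposh]; omega
      rw [SimpleGraph.Walk.length_cons]; omega
    · -- first edge goes to a middle; the closing edge is the last edge
      have hemem : s(hub, br c₀ i₀) ∈ p.edges := by
        rcases List.mem_cons.mp (by rwa [SimpleGraph.Walk.edges_cons] at hce') with h1 | h1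
        · rw [Sym2.eq_iff] at h1
          rcases h1 with ⟨-, h2⟩ | ⟨h2, -⟩ <;> simp at h2
        · exact h1
      have he' : s(hub, br c₀ i₀) ∈ p.reverse.edges := by
        rw [SimpleGraph.Walk.edges_reverse, List.mem_reverse]; exact hemem
      obtain ⟨hadj, q₂, hqeq⟩ := first_edge p.reverse hp.reverse he'
      have hnm : ∀ u ∈ q₂.support, u ≠ hub := by
        have hnd := (SimpleGraph.Walk.isPath_def _).mp hp.reverse
        rw [hqeq, SimpleGraph.Walk.support_cons] at hnd
        intro u hu hueq; subst hueq; exact (List.nodup_cons.mp hnd).1 hu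
      have hcc := walk_cp_const q₂ hnm _ q₂.start_mem_support
      have hc₀ : c₀ = c₁ := by simpa [cp] using hcc
      subst hc₀
      -- q₂ : Walk (br c₀ i₀) (mid c₀ i₁ j₁), no closing edges, inside copy c₀
      have hq₂p : q₂.IsPath := by
        have := hp.reverse; rw [hqeq] at this; exact this.of_cons
      have hq₂nc : ∀ e ∈ q₂.edges, ¬ isClosing e := by
        rintro e hee ⟨c₃, i₃, hi₃, rfl⟩
        exact hnm hub (SimpleGraph.Walk.fst_mem_support_of_mem_edges q₂ hee) rfl
      have hq₂ic : ∀ u ∈ q₂.support, inCopy c₀ u := by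
        intro u hu
        have := walk_cp_const q₂ hnm u hu
        exact Or.inr (by rw [this]; rfl)
      -- strip the mid endpoint
      have hq₃nil : ¬ q₂.reverse.Nil :=
        SimpleGraph.Walk.not_nil_of_ne (ne_mid_of_isBr (by trivial) _ _ _)
      obtain ⟨x₅, h₅, q₄, hq₃eq⟩ := SimpleGraph.Walk.not_nil_iff.mp hq₃nil
      have hnb₅ := mid_nbr (show adj (mid c₀ i₁ j₁) x₅ from h₅)
      have hx₅mem : x₅ ∈ q₂.support := by
        have : x₅ ∈ q₂.reverse.support := by
          rw [hq₃eq, SimpleGraph.Walk.support_cons]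
          exact List.mem_cons_of_mem _ q₄.start_mem_support
        rwa [SimpleGraph.Walk.support_reverse, List.mem_reverse] at this
      have hx₅pos : pos x₅ = 1 := by
        rcases hnb₅.2.2 with h1 | h1
        · exfalso
          exact hnm x₅ hx₅mem (isBr_pos_zero hnb₅.1 (by omega))
        · omega
      have hq₄p : q₄.IsPath := by
        have := hq₂p.reverse; rw [hq₃eq] at this; exact this.of_cons
      have hq₄nc : ∀ e ∈ q₄.edges, ¬ isClosing e := by
        intro e hee
        refine hq₂nc e ?_
        have : e ∈ q₂.reverse.edges := by
          rw [hq₃eq, SimpleGraph.Walk.edges_cons]; exact List.mem_cons_of_mem _ hee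
        rwa [SimpleGraph.Walk.edges_reverse, List.mem_reverse] at this
      have hq₄ic : ∀ u ∈ q₄.support, inCopy c₀ u := by
        intro u hu
        refine hq₂ic u ?_
        have : u ∈ q₂.reverse.support := by
          rw [hq₃eq, SimpleGraph.Walk.support_cons]; exact List.mem_cons_of_mem _ hu
        rwa [SimpleGraph.Walk.support_reverse, List.mem_reverse] at this
      have hml := (ML q₄.length q₄ rfl hq₄p hq₄nc hq₄ic hnb₅.1 (by trivial)).1
      have hq₄len : q₄.length = 2 * (l - 1) := by
        rw [hml, hx₅pos]
        have : pos (br c₀ i₀ : Vtx D l) = l := by simp [pos]; omega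
        rw [this]; omega
      -- assemble lengths
      have hq₂len : q₂.length = q₄.length + 1 := by
        have := congrArg SimpleGraph.Walk.length hq₃eq
        rw [SimpleGraph.Walk.length_reverse, SimpleGraph.Walk.length_cons] at this
        omega
      have hplen : p.length = q₂.length + 1 := by
        have := congrArg SimpleGraph.Walk.length hqeq
        rw [SimpleGraph.Walk.length_reverse, SimpleGraph.Walk.length_cons] at this
        omega
      rw [SimpleGraph.Walk.length_cons]
      omega
  · -- case: no closing edge; the cycle has length 4
    left
    push_neg at hclos
    -- find a middle vertex on the cycle
    obtain ⟨x₀, h₀, p₀, hw0⟩ := SimpleGraph.Walk.not_nil_iff.mp hw.not_nil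
    have hfe0 : s(v, x₀) ∈ w.edges := by
      rw [hw0, SimpleGraph.Walk.edges_cons]; exact List.mem_cons_self
    have hmid : ∃ (c : Fin (D+1)) (i : Fin l) (j : Fin (2*D+1)),
        (mid c i j : Vtx D l) ∈ w.support := by
      rcases exists_mid_of_not_closing (show adj v x₀ from h₀) (hclos _ hfe0) with
        ⟨c, i, j, hv⟩ | ⟨c, i, j, hv⟩
      · exact ⟨c, i, j, by rw [← hv]; exact w.start_mem_support⟩
      · exact ⟨c, i, j, by rw [← hv]; exact SimpleGraph.Walk.snd_mem_support_of_mem_edges w hfe0⟩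
    obtain ⟨c, i, j, hm⟩ := hmid
    set w' := w.rotate _ hm with hw'def
    have hlen : w'.length = w.length := length_rotate' w hm
    have hw' : w'.IsCycle := hw.rotate hm
    have hnc' : ∀ e ∈ w'.edges, ¬ isClosing e := by
      intro e hee
      exact hclos e (((SimpleGraph.Walk.rotate_edges w _ hm).perm.mem_iff).mp hee)
    rw [← hlen]
    clear_value w'
    clear hw'def hlen hm hw hfe0 hclos
    obtain ⟨a, h', p, rfl⟩ := SimpleGraph.Walk.not_nil_iff.mp hw'.not_nil
    obtain ⟨hp, hfe⟩ := (SimpleGraph.Walk.cons_isCycle_iff p h').mp hw'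
    have hnba := mid_nbr (show adj (mid c i j) a from h')
    -- strip the last edge (also incident to the middle vertex)
    have hq₃nil : ¬ p.reverse.Nil :=
      SimpleGraph.Walk.not_nil_of_ne (ne_mid_of_isBr hnba.1 c i j)
    obtain ⟨x₆, h₆, p₅, hq₃eq⟩ := SimpleGraph.Walk.not_nil_iff.mp hq₃nil
    have hnb₆ := mid_nbr (show adj (mid c i j) x₆ from h₆)
    have hx₆ne : x₆ ≠ a := by
      intro hh; subst hh
      apply hfe
      have : s(mid c i j, x₆) ∈ p.reverse.edges := by
        rw [hq₃eq, SimpleGraph.Walk.edges_cons]; exact List.mem_cons_self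
      rw [SimpleGraph.Walk.edges_reverse, List.mem_reverse] at this
      exact this
    have hpne : pos x₆ ≠ pos a := by
      intro hh
      exact hx₆ne (brInj hnb₆.1 hnba.1 hnb₆.2.1 hnba.2.1 hh)
    have hp₅p : p₅.IsPath := by
      have := hp.reverse; rw [hq₃eq] at this; exact this.of_cons
    have hp₅nc : ∀ e ∈ p₅.edges, ¬ isClosing e := by
      intro e hee
      refine hnc' e ?_
      rw [SimpleGraph.Walk.edges_cons]
      refine List.mem_cons_of_mem _ ?_
      have : e ∈ p.reverse.edges := by
        rw [hq₃eq, SimpleGraph.Walk.edges_cons]; exact List.mem_cons_of_mem _ hee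
      rwa [SimpleGraph.Walk.edges_reverse, List.mem_reverse] at this
    have hx₆hub : x₆ = hub → cp a = some c := by
      intro hh
      rcases hnba.2.1 with h1 | h1
      · exfalso
        apply hpne
        rw [hh, h1]
      · exact h1
    have hp₅ic : ∀ u ∈ p₅.support, inCopy c u := by
      by_cases hah : a = hub
      · intro u hu
        refine path_inCopy (c := c) p₅.reverse hp₅p.reverse (Or.inl hah) ?_ u
          (by rw [SimpleGraph.Walk.support_reverse, List.mem_reverse]; exact hu)
        rcases hnb₆.2.1 with h1 | h1
        · exact absurd (by rw [h1, hah]) hx₆ne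
        · exact h1
      · intro u hu
        refine path_inCopy (c := c) p₅ hp₅p hnb₆.2.1 ?_ u hu
        rcases hnba.2.1 with h1 | h1
        · exact absurd h1 hah
        · exact h1
    have hml := (ML p₅.length p₅ rfl hp₅p hp₅nc hp₅ic hnb₆.1 hnba.1).1
    have hp₅len : p₅.length = 2 := by
      rw [hml]
      rcases hnb₆.2.2 with h1 | h1 <;> rcases hnba.2.2 with h2 | h2 <;> omega
    have hplen : p.length = p₅.length + 1 := by
      have := congrArg SimpleGraph.Walk.length hq₃eq
      rw [SimpleGraph.Walk.length_reverse, SimpleGraph.Walk.length_cons] at this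
      omega
    rw [SimpleGraph.Walk.length_cons]
    omega

end HDL

namespace HDL
open Vtx

variable {D l : ℕ}

/-- left endpoint of gadget i -/
def epl (c : Fin (D+1)) (i : Fin l) : Vtx D l :=
  if h : i.val = 0 then hub else br c ⟨i.val - 1, by omega⟩

lemma epl_adj (c : Fin (D+1)) (i : Fin l) (j : Fin (2*D+1)) :
    adj (epl c i) (mid c i j : Vtx D l) := by
  unfold epl
  split
  · show i.val = 0; omega
  · refine ⟨rfl, Or.inr ?_⟩
    simp; omega

lemma br_adj (c : Fin (D+1)) (i : Fin l) (j : Fin (2*D+1)) :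
    adj (br c i) (mid c i j : Vtx D l) := ⟨rfl, Or.inl rfl⟩

lemma epl_ne_br (c c' : Fin (D+1)) (i i' : Fin l) : epl c i ≠ br c' i' ∨ True := Or.inr trivial

theorem not_colorable (hl : 1 ≤ l) (f : Vtx D l → Fin 2)
    (hf : ∀ v, {u | (G D l).Adj v u ∧ f u = f v}.ncard ≤ D) : False := by
  classical
  have fin2 : ∀ a b t : Fin 2, a ≠ b → t = a ∨ t = b := by decide
  -- each vertex has at most D neighbors of its own color; derive gadget equalities
  have gadget : ∀ (c : Fin (D+1)) (i : Fin l), f (epl c i) = f (br c i) := by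
    intro c i
    by_contra hne
    set F0 := Finset.univ.filter (fun j : Fin (2*D+1) => f (mid c i j) = f (epl c i)) with hF0
    set F1 := Finset.univ.filter (fun j : Fin (2*D+1) => f (mid c i j) = f (br c i)) with hF1
    have hcov : (Finset.univ : Finset (Fin (2*D+1))) ⊆ F0 ∪ F1 := by
      intro j _
      rcases fin2 (f (epl c i)) (f (br c i)) (f (mid c i j)) hne with h | h
      · exact Finset.mem_union_left _ (Finset.mem_filter.mpr ⟨Finset.mem_univ _, h⟩)
      · exact Finset.mem_union_right _ (Finset.mem_filter.mpr ⟨Finset.mem_univ _, h⟩)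
    have hcards : 2*D+1 ≤ F0.card + F1.card := by
      calc 2*D+1 = (Finset.univ : Finset (Fin (2*D+1))).card := by simp
      _ ≤ (F0 ∪ F1).card := Finset.card_le_card hcov
      _ ≤ F0.card + F1.card := Finset.card_union_le _ _
    have hinj : Function.Injective (fun j : Fin (2*D+1) => (mid c i j : Vtx D l)) := by
      intro j₁ j₂ h; simpa using h
    rcases (by omega : D + 1 ≤ F0.card ∨ D + 1 ≤ F1.card) with hbig | hbig
    · -- too many neighbors of epl's color
      have hsub : (fun j : Fin (2*D+1) => (mid c i j : Vtx D l)) '' ↑F0 ⊆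
          {u | (G D l).Adj (epl c i) u ∧ f u = f (epl c i)} := by
        rintro u ⟨j, hj, rfl⟩
        exact ⟨epl_adj c i j, (Finset.mem_filter.mp hj).2⟩
      have := Set.ncard_le_ncard hsub (Set.toFinite _)
      rw [Set.ncard_image_of_injective _ hinj, Set.ncard_coe_finset] at this
      have := hf (epl c i)
      omega
    · have hsub : (fun j : Fin (2*D+1) => (mid c i j : Vtx D l)) '' ↑F1 ⊆
          {u | (G D l).Adj (br c i) u ∧ f u = f (br c i)} := by
        rintro u ⟨j, hj, rfl⟩
        exact ⟨br_adj c i j, (Finset.mem_filter.mp hj).2⟩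
      have := Set.ncard_le_ncard hsub (Set.toFinite _)
      rw [Set.ncard_image_of_injective _ hinj, Set.ncard_coe_finset] at this
      have := hf (br c i)
      omega
  -- all branch vertices have the hub's color
  have chain : ∀ (c : Fin (D+1)) (k : ℕ) (hk : k < l), f (br c ⟨k, hk⟩) = f hub := by
    intro c k
    induction k with
    | zero =>
      intro hk
      have h := gadget c ⟨0, hk⟩
      have : epl c ⟨0, hk⟩ = hub := by simp [epl]
      rw [this] at h
      exact h.symm
    | succ k IH =>
      intro hk
      have h := gadget c ⟨k+1, hk⟩
      have : epl c ⟨k+1, hk⟩ = br c ⟨k, by omega⟩ := by simp [epl]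
      rw [this] at h
      rw [← h]
      exact IH (by omega)
  -- the hub now has D+1 same-colored neighbors
  have hlast : ∀ c : Fin (D+1), f (br c ⟨l-1, by omega⟩) = f hub := fun c =>
    chain c (l-1) (by omega)
  have hadj : ∀ c : Fin (D+1), (G D l).Adj hub (br c ⟨l-1, by omega⟩) := by
    intro c
    show ((⟨l-1, by omega⟩ : Fin l)).val + 1 = l
    simp; omega
  have hinj : Function.Injective (fun c : Fin (D+1) => (br c ⟨l-1, by omega⟩ : Vtx D l)) := by
    intro c₁ c₂ h; simpa using h
  have hsub : (fun c : Fin (D+1) => (br c ⟨l-1, by omega⟩ : Vtx D l)) '' Set.univ ⊆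
      {u | (G D l).Adj hub u ∧ f u = f hub} := by
    rintro u ⟨c, -, rfl⟩
    exact ⟨hadj c, hlast c⟩
  have h1 := Set.ncard_le_ncard hsub (Set.toFinite _)
  rw [Set.ncard_image_of_injective _ hinj, Set.ncard_univ, Nat.card_eq_fintype_card,
    Fintype.card_fin] at h1
  have := hf hub
  omega

end HDL

namespace HDL

/-- rotation of the positions 0..l taking b to l -/
private def rot (l b x : ℕ) : ℕ := if b < x then x - (b+1) else x + (l - b)

private lemma rot_le {l b x : ℕ} (hb : b ≤ l) (hx : x ≤ l) : rot l b x ≤ l := by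
  unfold rot; split <;> omega

private lemma rot_inj {l b x y : ℕ} (hb : b ≤ l) (hx : x ≤ l) (hy : y ≤ l)
    (h : rot l b x = rot l b y) : x = y := by
  unfold rot at h; split at h <;> split at h <;> omega

private lemma rot_b {l b : ℕ} (hb : b ≤ l) : rot l b b = l := by unfold rot; split <;> omega

private lemma rot_cyc {l b x y : ℕ} (hb : b ≤ l) (hx : x ≤ l) (hy : y ≤ l)
    (h : CycAdj l x y) : CycAdj l (rot l b x) (rot l b y) := by
  unfold CycAdj at *
  unfold rot
  split <;> split <;> omega

/-- ±1-walks hit all intermediate values -/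
private lemma rtg_interval {S : Set ℕ} :
    ∀ {x y : ℕ}, Relation.ReflTransGen
      (fun a b => (a = b + 1 ∨ b = a + 1) ∧ a ∈ S ∧ b ∈ S) x y →
    x ∈ S → ∀ k, min x y ≤ k → k ≤ max x y → k ∈ S := by
  intro x y h
  induction h with
  | refl =>
    intro hx k hk1 hk2
    have hkx : k = x := by omega
    subst hkx
    exact hx
  | @tail y' y hxy' hstep IH =>
    intro hx k hk1 hk2
    by_cases hky : k = y
    · rw [hky]; exact hstep.2.2
    · exact IH hx k (by omega) (by omega)

/-- No connected proper subset of the cycle of positions has ≥ 3 boundary edges. -/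
lemma CYC3 {l : ℕ} (hl : 1 ≤ l) (S : Set ℕ) (hSl : ∀ x ∈ S, x ≤ l)
    (b : ℕ) (hbl : b ≤ l) (hbS : b ∉ S)
    (hconn : ∀ p ∈ S, ∀ q ∈ S, Relation.ReflTransGen
      (fun p q => CycAdj l p q ∧ p ∈ S ∧ q ∈ S) p q)
    (p q : Fin 3 → ℕ) (hpS : ∀ t, p t ∈ S) (hqS : ∀ t, q t ∉ S) (hql : ∀ t, q t ≤ l)
    (hcyc : ∀ t, CycAdj l (p t) (q t))
    (hdist : ∀ t t', t ≠ t' → ¬ (p t = p t' ∧ q t = q t')) : False := by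
  classical
  set S' : Set ℕ := (rot l b) '' S with hS'
  have hS'mem : ∀ x ∈ S, rot l b x ∈ S' := fun x hx => ⟨x, hx, rfl⟩
  have hS'le : ∀ z ∈ S', z ≤ l - 1 := by
    rintro z ⟨x, hx, rfl⟩
    have h1 : rot l b x ≤ l := rot_le hbl (hSl x hx)
    have h2 : rot l b x ≠ l := by
      intro he
      have : x = b := rot_inj hbl (hSl x hx) hbl (by rw [he, rot_b hbl])
      exact hbS (this ▸ hx)
    omega
  have hS'ne : S'.Nonempty := ⟨rot l b (p 0), hS'mem _ (hpS 0)⟩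
  have hbdd : BddAbove S' := ⟨l, fun z hz => le_trans (hS'le z hz) (by omega)⟩
  set lo := sInf S' with hlo
  set hi := sSup S' with hhi
  have hloS : lo ∈ S' := Nat.sInf_mem hS'ne
  have hhiS : hi ∈ S' := Nat.sSup_mem hS'ne hbdd
  have hlole : ∀ z ∈ S', lo ≤ z := fun z hz => Nat.sInf_le hz
  have hhile : ∀ z ∈ S', z ≤ hi := fun z hz => le_csSup hbdd hz
  -- connectivity of S' under ±1 steps
  have hconn' : ∀ x ∈ S', ∀ y ∈ S', Relation.ReflTransGen
      (fun a b => (a = b + 1 ∨ b = a + 1) ∧ a ∈ S' ∧ b ∈ S') x y := by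
    rintro x ⟨x₀, hx₀, rfl⟩ y ⟨y₀, hy₀, rfl⟩
    refine Relation.ReflTransGen.lift (rot l b) ?_ _ _ (hconn x₀ hx₀ y₀ hy₀)
    rintro a c ⟨hac, haS, hcS⟩
    have h1 := rot_cyc hbl (hSl a haS) (hSl c hcS) hac
    have h2 := hS'mem a haS
    have h3 := hS'mem c hcS
    refine ⟨?_, h2, h3⟩
    have h4 := hS'le _ h2
    have h5 := hS'le _ h3
    unfold CycAdj at h1
    omega
  have hint : ∀ k, lo ≤ k → k ≤ hi → k ∈ S' := by
    intro k hk1 hk2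
    exact rtg_interval (hconn' lo hloS hi hhiS) hloS k (by omega) (by omega)
  -- classify the three boundary pairs
  have key : ∀ t, (rot l b (p t) = lo ∧ rot l b (q t) + 1 = lo) ∨
      (rot l b (p t) = hi ∧ rot l b (q t) = hi + 1) ∨
      (rot l b (p t) = 0 ∧ rot l b (q t) = l ∧ lo = 0) := by
    intro t
    have hP : rot l b (p t) ∈ S' := hS'mem _ (hpS t)
    have hQ : rot l b (q t) ∉ S' := by
      rintro ⟨x, hx, hxe⟩
      have : x = q t := rot_inj hbl (hSl x hx) (hql t) hxe
      exact hqS t (this ▸ hx)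
    have hC := rot_cyc hbl (hSl _ (hpS t)) (hql t) (hcyc t)
    have hPle : rot l b (p t) ≤ l - 1 := hS'le _ hP
    have hQle : rot l b (q t) ≤ l := rot_le hbl (hql t)
    have hPlo : lo ≤ rot l b (p t) := hlole _ hP
    have hPhi : rot l b (p t) ≤ hi := hhile _ hP
    have hQint : ¬ (lo ≤ rot l b (q t) ∧ rot l b (q t) ≤ hi) := by
      intro hcon
      exact hQ (hint _ hcon.1 hcon.2)
    have hlo0 : rot l b (p t) = 0 → lo = 0 := by
      intro h0
      have := hlole _ hP
      omega
    unfold CycAdj at hC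
    rcases hC with h | h | h | h
    · left; omega
    · right; left; omega
    · right; right; exact ⟨h.1, h.2, hlo0 h.1⟩
    · omega
  have hdist' : ∀ t t', t ≠ t' →
      ¬ (rot l b (p t) = rot l b (p t') ∧ rot l b (q t) = rot l b (q t')) := by
    intro t t' htt ⟨h1, h2⟩
    exact hdist t t' htt ⟨rot_inj hbl (hSl _ (hpS t)) (hSl _ (hpS t')) h1,
      rot_inj hbl (hql t) (hql t') h2⟩
  have k0 := key 0
  have k1 := key 1
  have k2 := key 2
  have d01 := hdist' 0 1 (by decide)
  have d02 := hdist' 0 2 (by decide)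
  have d12 := hdist' 1 2 (by decide)
  rcases k0 with k0 | k0 | k0 <;> rcases k1 with k1 | k1 | k1 <;>
    rcases k2 with k2 | k2 | k2 <;> omega

end HDL

namespace HDL
open Vtx

variable {D l : ℕ}

lemma exists_path_in {V : Type*} [DecidableEq V] {G : SimpleGraph V} {S : Set V}
    (hconn : (G.induce S).Connected) {u v : V} (hu : u ∈ S) (hv : v ∈ S) :
    ∃ p : G.Walk u v, p.IsPath ∧ ∀ z ∈ p.support, z ∈ S := by
  obtain ⟨w⟩ := hconn.preconnected ⟨u, hu⟩ ⟨v, hv⟩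
  let w' : G.Walk u v := w.map (SimpleGraph.Embedding.induce S).toHom
  refine ⟨w'.bypass, SimpleGraph.Walk.bypass_isPath w', ?_⟩
  intro z hz
  have hz' : z ∈ w'.support := SimpleGraph.Walk.support_bypass_subset w' hz
  have hz'' : z ∈ (w.map (SimpleGraph.Embedding.induce S).toHom).support := hz'
  rw [SimpleGraph.Walk.support_map] at hz''
  obtain ⟨⟨z₀, hz₀⟩, -, rfl⟩ := List.mem_map.mp hz''
  exact hz₀

lemma cycAdj_symm {p q : ℕ} (h : CycAdj l p q) : CycAdj l q p := by
  unfold CycAdj at *; omega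

/-- Core lemma: no graph in which every vertex has three distinct neighbors and which
is suitably connected is a minor of `G D l`. -/
lemma no_minor_aux (hl : 1 ≤ l) {W : Type} [Fintype W] [DecidableEq W]
    (H : SimpleGraph W) (nbr : W → Fin 3 → W)
    (hnadj : ∀ w t, H.Adj w (nbr w t))
    (hninj : ∀ w, Function.Injective (nbr w))
    (hcop : ∀ w₀ w w', w ≠ w' → w ≠ w₀ → w' ≠ w₀ →
      (H.Adj w w' ∨ ∃ u, u ≠ w₀ ∧ H.Adj w u ∧ H.Adj u w'))
    (hW3 : 3 ≤ Fintype.card W) :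
    ¬ H.IsMinor (G D l) := by
  classical
  rintro ⟨B, hne, hconn, hdisj, hadj⟩
  have hmem2 : ∀ (w w' : W), w ≠ w' → ∀ x, x ∈ B w → x ∈ B w' → False :=
    fun w w' hww x hx hx' => Set.disjoint_left.mp (hdisj _ _ hww) hx hx'
  have hnbrne : ∀ w t, nbr w t ≠ w := fun w t => (H.ne_of_adj (hnadj w t)).symm
  -- Step 1 : every branch set contains a branch-type vertex
  have hbr : ∀ w, ∃ z ∈ B w, isBr z := by
    intro w
    by_contra hno
    push_neg at hno
    obtain ⟨z₀, hz₀⟩ := hne w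
    have hsingle : ∀ u ∈ B w, u = z₀ := by
      intro u hu
      by_contra hne'
      obtain ⟨pth, hp, hsup⟩ := exists_path_in (hconn w) hu hz₀
      cases pth with
      | nil => exact hne' rfl
      | @cons _ x₁ _ h q =>
        have hx₁ : x₁ ∈ B w := hsup x₁ (by simp)
        have hu' : ¬ isBr u := hno u hu
        cases hum : u with
        | hub => exact hu' (by rw [hum]; trivial)
        | br c i => exact hu' (by rw [hum]; trivial)
        | mid c i j =>
          rw [hum] at h
          exact hno x₁ hx₁ (mid_nbr h).1
    obtain ⟨c, i, j, rfl⟩ : ∃ c i j, z₀ = mid c i j := by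
      cases hz : z₀ with
      | hub => exact absurd (by rw [hz] at hz₀; exact hno _ hz₀) (by simp [isBr])
      | br c i => exact absurd (by rw [hz] at hz₀; exact hno _ hz₀) (by simp [isBr])
      | mid c i j => exact ⟨c, i, j, rfl⟩
    have hedge : ∀ t, ∃ a ∈ B w, ∃ bb ∈ B (nbr w t), (G D l).Adj a bb :=
      fun t => hadj _ _ (hnadj w t)
    choose a ha bb hbb hab using hedge
    have hbmid : ∀ t, isBr (bb t) ∧ inCopy c (bb t) ∧
        (pos (bb t) = i.val ∨ pos (bb t) = i.val + 1) := by
      intro t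
      have hseq := hsingle (a t) (ha t)
      have h' := hab t
      rw [hseq] at h'
      exact mid_nbr h'
    have hcol : ∀ t t', t ≠ t' → pos (bb t) = pos (bb t') → False := by
      intro t t' htt hpp
      have : bb t = bb t' := brInj (hbmid t).1 (hbmid t').1 (hbmid t).2.1 (hbmid t').2.1 hpp
      exact hmem2 _ _ (fun hnn => htt (hninj w hnn)) _ (hbb t) (this ▸ hbb t')
    rcases (hbmid 0).2.2 with h0 | h0 <;> rcases (hbmid 1).2.2 with h1 | h1 <;>
      rcases (hbmid 2).2.2 with h2 | h2 <;>
      first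
      | exact hcol 0 1 (by decide) (by omega)
      | exact hcol 0 2 (by decide) (by omega)
      | exact hcol 1 2 (by decide) (by omega)
  -- Step 2 : hub-free branch sets lie in one copy
  have hcopy : ∀ w, hub ∉ B w → ∃ c, ∀ v ∈ B w, cp v = some c := by
    intro w hhw
    obtain ⟨z, hz, hbz⟩ := hbr w
    obtain ⟨c, i, rfl⟩ : ∃ c i, z = br c i := by
      cases hz' : z with
      | hub => rw [hz'] at hz; exact absurd hz hhw
      | br c i => exact ⟨c, i, rfl⟩
      | mid => rw [hz'] at hbz; exact absurd hbz not_isBr_mid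
    refine ⟨c, fun v hv => ?_⟩
    obtain ⟨pth, hp, hsup⟩ := exists_path_in (hconn w) hv hz
    have := walk_cp_const pth (fun u hu he => hhw (he ▸ hsup u hu)) v pth.start_mem_support
    simpa [cp] using this
  have hcopy' : ∀ w, ∃ c, hub ∉ B w → ∀ v ∈ B w, cp v = some c := by
    intro w
    by_cases h : hub ∉ B w
    · obtain ⟨c, hc⟩ := hcopy w h
      exact ⟨c, fun _ => hc⟩
    · exact ⟨default, fun h' => absurd h' h⟩
  choose cw hcw using hcopy'
  -- adjacent hub-free sets share the copy
  have hpair : ∀ w w', hub ∉ B w → hub ∉ B w' → H.Adj w w' →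
      cw w = cw w' := by
    intro w w' h h' hA
    obtain ⟨x, hx, y, hy, hxy⟩ := hadj _ _ hA
    have h1 := hcw w h x hx
    have h2 := hcw w' h' y hy
    have h3 := cp_adj hxy (fun he => h (he ▸ hx)) (fun he => h' (he ▸ hy))
    rw [h1, h2] at h3
    exact Option.some.inj h3
  -- at most one branch set contains the hub
  have hubuniq : ∀ {w w'}, hub ∈ B w → hub ∈ B w' → w = w' := by
    intro w w' h h'
    by_contra hne'
    exact hmem2 _ _ hne' _ h h'
  -- any two hub-free sets share the copy
  have hstep2 : ∀ w w', hub ∉ B w → hub ∉ B w' → w ≠ w' →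
      cw w = cw w' := by
    intro w w' h h' hww
    by_cases hex : ∃ wh, hub ∈ B wh
    · obtain ⟨wh, hwh⟩ := hex
      have hw₀w : w ≠ wh := fun he => h (he ▸ hwh)
      have hw₀w' : w' ≠ wh := fun he => h' (he ▸ hwh)
      rcases hcop wh w w' hww hw₀w hw₀w' with hA | ⟨u, hu₀, hA1, hA2⟩
      · exact hpair w w' h h' hA
      · have hu : hub ∉ B u := fun hhu => hu₀ (hubuniq hhu hwh)
        exact (hpair w u h hu hA1).trans (hpair u w' hu h' hA2)
    · push_neg at hex
      obtain ⟨w₀, hw₀w, hw₀w'⟩ : ∃ w₀, w ≠ w₀ ∧ w' ≠ w₀ := by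
        by_contra hno
        push_neg at hno
        have hsub : (Finset.univ : Finset W) ⊆ {w, w'} := by
          intro x _
          by_cases hx : w = x
          · simp [← hx]
          · have := hno x hx
            simp [this]
        have := Finset.card_le_card hsub
        have h2 : ({w, w'} : Finset W).card ≤ 2 :=
          (Finset.card_insert_le _ _).trans (by simp)
        rw [Finset.card_univ] at this
        omega
      rcases hcop w₀ w w' hww hw₀w hw₀w' with hA | ⟨u, hu₀, hA1, hA2⟩
      · exact hpair w w' h h' hA
      · exact (hpair w u h (hex u) hA1).trans (hpair u w' (hex u) h' hA2)
  -- Step 3 : the common copy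
  obtain ⟨wf, hwf⟩ : ∃ w, hub ∉ B w := by
    by_contra hno
    push_neg at hno
    obtain ⟨x, y, hxy⟩ := Fintype.exists_pair_of_one_lt_card (by omega : 1 < Fintype.card W)
    exact hxy (hubuniq (hno x) (hno y))
  set cstar := cw wf with hcstar
  have hcommon : ∀ w (h : hub ∉ B w), ∀ v ∈ B w, cp v = some cstar := by
    intro w h v hv
    by_cases hwwf : w = wf
    · subst hwwf; exact hcw w h v hv
    · rw [hcw w h v hv, hstep2 w wf h hwf hwwf]

  -- Step 4 : the sets of positions
  set T : W → Set ℕ := fun w => {p | ∃ z, z ∈ B w ∧ isBr z ∧ inCopy cstar z ∧ pos z = p}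
    with hT
  have hT1 : ∀ w, ∀ p ∈ T w, p ≤ l := by
    rintro w p ⟨z, -, -, -, rfl⟩
    exact pos_le z
  have hT2 : ∀ w w', w ≠ w' → ∀ p, p ∈ T w → p ∈ T w' → False := by
    rintro w w' hww p ⟨z, hz, hbz, hcz, rfl⟩ ⟨z', hz', hbz', hcz', hpz⟩
    have : z' = z := brInj hbz' hbz hcz' hcz hpz
    exact hmem2 _ _ hww _ hz (this ▸ hz')
  have hinCopyB : ∀ w, hub ∉ B w → ∀ v ∈ B w, inCopy cstar v :=
    fun w h v hv => Or.inr (hcommon w h v hv)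
  have hT3 : ∀ w, ∃ p, p ∈ T w := by
    intro w
    by_cases hh : hub ∈ B w
    · exact ⟨0, hub, hh, trivial, inCopy_hub _, rfl⟩
    · obtain ⟨z, hz, hbz⟩ := hbr w
      exact ⟨pos z, z, hz, hbz, hinCopyB w hh z hz, rfl⟩
  -- connectivity of T w
  have hT4 : ∀ w, ∀ p ∈ T w, ∀ q ∈ T w, Relation.ReflTransGen
      (fun p q => CycAdj l p q ∧ p ∈ T w ∧ q ∈ T w) p q := by
    rintro w p ⟨z, hz, hbz, hcz, rfl⟩ q ⟨z', hz', hbz', hcz', rfl⟩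
    by_cases hpq : pos z = pos z'
    · rw [hpq]
    · have hzz' : z ≠ z' := fun he => hpq (he ▸ rfl)
      obtain ⟨pth, hp, hsup⟩ := exists_path_in (hconn w) hz hz'
      have hico : ∀ u ∈ pth.support, inCopy cstar u := by
        by_cases hh : hub ∈ B w
        · by_cases hz'h : z' = hub
          · subst hz'h
            have hzh : z ≠ hub := fun he => hzz' he
            intro u hu
            refine path_inCopy (c := cstar) pth.reverse hp.reverse (Or.inl rfl) ?_ u
              (by rw [SimpleGraph.Walk.support_reverse, List.mem_reverse]; exact hu)
            rcases hcz with h1 | h1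
            · exact absurd h1 hzh
            · exact h1
          · intro u hu
            refine path_inCopy (c := cstar) pth hp hcz ?_ u hu
            rcases hcz' with h1 | h1
            · exact absurd h1 hz'h
            · exact h1
        · intro u hu
          exact hinCopyB w hh u (hsup u hu)
      have := WBL pth.length pth rfl hp hico hbz hbz'
      refine Relation.ReflTransGen.mono ?_ _ _ this
      rintro pp qq ⟨hc, ⟨za, hza, hbza, hpza⟩, ⟨zb, hzb, hbzb, hpzb⟩⟩
      exact ⟨hc, ⟨za, hsup za hza, hbza, hico za hza, hpza⟩,
        ⟨zb, hsup zb hzb, hbzb, hico zb hzb, hpzb⟩⟩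
  -- Step 5 : adjacency of branch sets gives cycle adjacency of position sets
  have hmain : ∀ w w', w ≠ w' → ∀ (c : Fin (D+1)) (i : Fin l) (j : Fin (2*D+1)) bv,
      (mid c i j : Vtx D l) ∈ B w → bv ∈ B w' → adj (mid c i j) bv →
      ∃ p ∈ T w, ∃ q ∈ T w', CycAdj l p q := by
    intro w w' hww c i j bv hmw hbw' hadj'
    have hnb := mid_nbr hadj'
    -- the copy is cstar
    have hc : c = cstar := by
      by_cases hh : hub ∈ B w
      · -- then w' is hub-free and bv ≠ hub
        have hbvh : bv ≠ hub := fun he => hmem2 _ _ hww _ hh (he ▸ hbw')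
        have hw' : hub ∉ B w' := fun hhb => hww (hubuniq hh hhb)
        have h1 := hcommon w' hw' bv hbw'
        have h2 := cp_adj hadj' (by simp) hbvh
        rw [h1] at h2
        have h3 : cp (mid c i j : Vtx D l) = some c := rfl
        rw [h3] at h2
        exact Option.some.inj h2
      · have h1 := hcommon w hh _ hmw
        exact Option.some.inj h1
    subst hc
    -- bv gives a position in T w'
    have hq : pos bv ∈ T w' := ⟨bv, hbw', hnb.1, hnb.2.1, rfl⟩
    -- the other neighbor of the mid inside B w
    obtain ⟨z, hz, hbz⟩ := hbr w
    have hmz : (mid cstar i j : Vtx D l) ≠ z := ne_mid_of_isBr hbz _ _ _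
    obtain ⟨pth, hp, hsup⟩ := exists_path_in (hconn w) hmw hz
    obtain ⟨u, hadju, q₂, rfl⟩ : ∃ (u : Vtx D l) (ha : (G D l).Adj (mid cstar i j) u)
        (q₂ : (G D l).Walk u z), pth = SimpleGraph.Walk.cons ha q₂ := by
      cases pth with
      | nil => exact absurd rfl hmz
      | cons h q => exact ⟨_, h, q, rfl⟩
    have hu : u ∈ B w := hsup u (by simp)
    have hnbu := mid_nbr (show adj (mid cstar i j) u from hadju)
    have hpu : pos u ∈ T w := ⟨u, hu, hnbu.1, hnbu.2.1, rfl⟩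
    refine ⟨pos u, hpu, pos bv, hq, ?_⟩
    have hne' : pos u ≠ pos bv := by
      intro he
      have : u = bv := brInj hnbu.1 hnb.1 hnbu.2.1 hnb.2.1 he
      exact hmem2 _ _ hww _ hu (this ▸ hbw')
    unfold CycAdj
    rcases hnbu.2.2 with h1 | h1 <;> rcases hnb.2.2 with h2 | h2 <;> omega
  have hT5 : ∀ w w', w ≠ w' → H.Adj w w' → ∃ p ∈ T w, ∃ q ∈ T w', CycAdj l p q := by
    intro w w' hww hA
    obtain ⟨x, hx, y, hy, hxy⟩ := hadj _ _ hA
    by_cases hbx : isBr x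
    · by_cases hby : isBr y
      · -- closing edge between the two sets
        have hbb := br_br_adj hxy hbx hby
        rcases hbb.2 with ⟨h1, h2⟩ | ⟨h1, h2⟩
        · -- x = hub, y = br
          have hxh : x = hub := isBr_pos_zero hbx h1
          subst hxh
          have hw' : hub ∉ B w' := fun hhb => hww (hubuniq hx hhb)
          refine ⟨0, ⟨hub, hx, trivial, inCopy_hub _, rfl⟩,
            pos y, ⟨y, hy, hby, hinCopyB w' hw' y hy, rfl⟩, ?_⟩
          unfold CycAdj; omega
        · have hyh : y = hub := isBr_pos_zero hby h2
          subst hyh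
          have hw : hub ∉ B w := fun hhb => hww.symm (hubuniq hy hhb)
          refine ⟨pos x, ⟨x, hx, hbx, hinCopyB w hw x hx, rfl⟩,
            0, ⟨hub, hy, trivial, inCopy_hub _, rfl⟩, ?_⟩
          unfold CycAdj; omega
      · -- y is a mid
        obtain ⟨c, i, j, rfl⟩ : ∃ c i j, y = mid c i j := by
          cases hyy : y with
          | hub => rw [hyy] at hby; exact absurd trivial hby
          | br c i => rw [hyy] at hby; exact absurd trivial hby
          | mid c i j => exact ⟨c, i, j, rfl⟩
        obtain ⟨q, hqT, p, hpT, hc⟩ := hmain w' w hww.symm c i j x hy hx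
          (adj_symm _ _ hxy)
        exact ⟨p, hpT, q, hqT, cycAdj_symm hc⟩
    · obtain ⟨c, i, j, rfl⟩ : ∃ c i j, x = mid c i j := by
        cases hxx : x with
        | hub => rw [hxx] at hbx; exact absurd trivial hbx
        | br c i => rw [hxx] at hbx; exact absurd trivial hbx
        | mid c i j => exact ⟨c, i, j, rfl⟩
      exact hmain w w' hww c i j y hx hy hxy
  -- final contradiction via the cycle counting lemma
  have hWne : Nonempty W := Fintype.card_pos_iff.mp (by omega)
  obtain ⟨w⟩ := hWne
  have hchoice : ∀ t : Fin 3, ∃ p ∈ T w, ∃ q ∈ T (nbr w t), CycAdj l p q :=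
    fun t => hT5 w (nbr w t) (hnbrne w t).symm (hnadj w t)
  choose pp hppT qq hqqT hcycpq using hchoice
  obtain ⟨b₀, hb₀⟩ := hT3 (nbr w 0)
  refine CYC3 hl (T w) (hT1 w) b₀ (hT1 _ _ hb₀)
    (fun hb => hT2 w (nbr w 0) (hnbrne w 0).symm b₀ hb hb₀) (hT4 w) pp qq hppT
    (fun t hq => hT2 w (nbr w t) (hnbrne w t).symm _ hq (hqqT t))
    (fun t => hT1 _ _ (hqqT t)) hcycpq ?_
  rintro t t' htt ⟨-, h2⟩
  exact hT2 (nbr w t) (nbr w t') (fun he => htt (hninj w he)) _ (hqqT t) (h2 ▸ hqqT t')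

end HDL

namespace HDL
open Vtx

variable {D l : ℕ}

lemma no_K5_minor (hl : 1 ≤ l) : ¬ (completeGraph (Fin 5)).IsMinor (G D l) := by
  refine no_minor_aux hl _ (fun i t => ⟨(i.val + t.val + 1) % 5, by omega⟩) ?_ ?_ ?_ ?_
  · intro w t
    show w ≠ _
    intro h
    have := congrArg Fin.val h
    simp at this
    omega
  · intro w t t' h
    have := congrArg Fin.val h
    simp at this
    have ht := t.isLt
    have ht' := t'.isLt
    exact Fin.ext (by omega)
  · intro w₀ w w' hww _ _
    exact Or.inl hww
  · simp
 
lemma no_K33_minor (hl : 1 ≤ l) :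
    ¬ (completeBipartiteGraph (Fin 3) (Fin 3)).IsMinor (G D l) := by
  refine no_minor_aux hl _
    (fun w t => match w with | .inl _ => .inr t | .inr _ => .inl t) ?_ ?_ ?_ ?_
  · intro w t
    cases w <;> simp [completeBipartiteGraph]
  · intro w t t' h
    cases w <;> simpa using h
  · intro w₀ w w' hww hw hw'
    match w, w' with
    | .inl a, .inr b => exact Or.inl (by simp [completeBipartiteGraph])
    | .inr a, .inl b => exact Or.inl (by simp [completeBipartiteGraph])
    | .inl a, .inl a' =>
      right
      match w₀ with
      | .inl a₀ =>
        exact ⟨.inr 0, by simp, by simp [completeBipartiteGraph], by simp [completeBipartiteGraph]⟩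
      | .inr b₀ =>
        refine ⟨.inr (b₀ + 1), ?_, by simp [completeBipartiteGraph], by simp [completeBipartiteGraph]⟩
        simp only [ne_eq, Sum.inr.injEq]
        intro h
        have := congrArg Fin.val h
        simp [Fin.val_add] at this
        omega
    | .inr a, .inr a' =>
      right
      match w₀ with
      | .inr a₀ =>
        exact ⟨.inl 0, by simp, by simp [completeBipartiteGraph], by simp [completeBipartiteGraph]⟩
      | .inl b₀ =>
        refine ⟨.inl (b₀ + 1), ?_, by simp [completeBipartiteGraph], by simp [completeBipartiteGraph]⟩
        simp only [ne_eq, Sum.inl.injEq]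
        intro h
        have := congrArg Fin.val h
        simp [Fin.val_add] at this
        omega
  · simp

end HDL

theorem stmt1 (D l : ℕ) (hl : 1 ≤ l) :
    ∃ (V : Type) (_ : Fintype V) (G : SimpleGraph V), G.Planar ∧
      (∀ (v : V) (w : G.Walk v v), w.IsCycle → w.length = 4 ∨ w.length = 2 * l + 1) ∧
      ¬ G.DefectiveColorable ![D, D] := by
  refine ⟨HDL.Vtx D l, inferInstance, HDL.G D l,
    ⟨HDL.no_K5_minor hl, HDL.no_K33_minor hl⟩,
    fun v w hw => HDL.cycle_len hl w hw, ?_⟩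
  rintro ⟨f, hf⟩
  refine HDL.not_colorable hl f (fun v => ?_)
  have h1 := hf v
  have h2 : ∀ t : Fin 2, (![D, D] : Fin 2 → ℕ) t = D := by
    intro t; fin_cases t <;> rfl
  rwa [h2 (f v)] at h1
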